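/- arXiv:2007.05591 — 2 statements merged into one kernel-verified Lean document; each statement's English description precedes it below -/
import Mathlib

section
/- Let (ℓ_p)_{p∈P} be path latencies at a flow x, let ℓ_p^mc ≥ ℓ_p pointwise with ℓ_p^mc(x) ≤ γ·ℓ_p(x), and let (δ_p)_{p∈P} be real numbers with Σ_p δ_p = 0 and Σ_{p: δ_p > 0} δ_p ≤ r. Suppose there is a path p̄ with ℓ_{p̄}^mc(x) ≥ ℓ_p^mc(x) for all p with δ_p > 0 and ℓ_{p̄}(x) ≤ ℓ_p(x) for all p with δ_p < 0, and write Λ = ℓ_{p̄}(x). Then Σ_p δ_p·ℓ_p^mc(x) ≤ Λ·r·(γ−1). -/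
open Finset in
/-- The key finite-sum inequality in the proof of Lemma 1:
`∑_p δ_p·ℓ_p^mc(x) ≤ Λ·r·(γ−1)`. -/
theorem stmt12 {P : Type*} [Fintype P] [DecidableEq P]
    (L Lmc δ : P → ℝ) (γ r Λ : ℝ) (hγ : 1 ≤ γ) (hrnn : 0 ≤ r)
    (hLnn : ∀ p, 0 ≤ L p)
    (hLle : ∀ p, L p ≤ Lmc p)
    (hLγ : ∀ p, Lmc p ≤ γ * L p)
    (hsum : ∑ p, δ p = 0)
    (hpos : ∑ p ∈ Finset.univ.filter (fun p => 0 < δ p), δ p ≤ r)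
    (pbar : P)
    (hmax : ∀ p, 0 < δ p → Lmc p ≤ Lmc pbar)
    (hmin : ∀ p, δ p < 0 → L pbar ≤ L p)
    (hΛ : Λ = L pbar) :
    ∑ p, δ p * Lmc p ≤ Λ * r * (γ - 1) := by
  have hΛnn : 0 ≤ Λ := hΛ ▸ hLnn pbar
  have key : ∀ p, δ p * Lmc p ≤
      Λ * δ p + (γ - 1) * Λ * (if 0 < δ p then δ p else 0) := by
    intro p
    rcases lt_trichotomy (δ p) 0 with h | h | h
    · rw [if_neg (by linarith)]
      have h1 : δ p * Lmc p ≤ δ p * L p :=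
        mul_le_mul_of_nonpos_left (hLle p) h.le
      have h2 : δ p * L p ≤ δ p * L pbar :=
        mul_le_mul_of_nonpos_left (hmin p h) h.le
      nlinarith [hΛ]
    · simp [h]
    · rw [if_pos h]
      have h1 : δ p * Lmc p ≤ δ p * Lmc pbar :=
        mul_le_mul_of_nonneg_left (hmax p h) h.le
      have h2 : Lmc pbar ≤ γ * L pbar := hLγ pbar
      have h3 : δ p * Lmc pbar ≤ δ p * (γ * L pbar) :=
        mul_le_mul_of_nonneg_left h2 h.le
      subst hΛ; nlinarith
  calc ∑ p, δ p * Lmc p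
      ≤ ∑ p, (Λ * δ p + (γ - 1) * Λ * (if 0 < δ p then δ p else 0)) :=
        Finset.sum_le_sum fun p _ => key p
    _ = Λ * ∑ p, δ p + (γ - 1) * Λ *
          ∑ p ∈ Finset.univ.filter (fun p => 0 < δ p), δ p := by
        rw [Finset.sum_add_distrib, ← Finset.mul_sum, ← Finset.mul_sum,
          Finset.sum_filter]
    _ ≤ Λ * r * (γ - 1) := by
        rw [hsum, mul_zero, zero_add]
        nlinarith [mul_nonneg (sub_nonneg.mpr hγ) hΛnn]
end

section
/- For every integer p ≥ 1, 1 + p/2 > 1/(1 − p·(p+1)^(−(p+1)/p)); that is, the maximum perversity index for degree-p polynomial latencies strictly exceeds the fully-selfish price of anarchy. -/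
/-- Key combinatorial inequality: `(p+2)^p < (p+1)^(p+1)` for `p ≥ 1`. -/
lemma aux_nat_ineq : ∀ p : ℕ, 1 ≤ p → (p + 2) ^ p < (p + 1) ^ (p + 1) := by
  intro p
  induction p with
  | zero => intro h; omega
  | succ n ih =>
    intro _
    rcases Nat.eq_zero_or_pos n with h0 | hpos
    · subst h0; norm_num
    · have IH := ih hpos
      -- (n+3)^(n+1) * (n+1)^(n+1) = ((n+3)*(n+1))^(n+1) < ((n+2)^2)^(n+1)
      have h1 : (n + 3) ^ (n + 1) * (n + 1) ^ (n + 1) < (n + 2) ^ (2 * (n + 1)) := by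
        rw [pow_mul, ← mul_pow]
        exact Nat.pow_lt_pow_left (show (n+3)*(n+1) < (n+2)^2 by nlinarith) (by omega)
      -- multiply IH: (n+2)^n < (n+1)^(n+1)
      have h2 : (n + 3) ^ (n + 1) * (n + 2) ^ n < (n + 2) ^ (2 * (n + 1)) := by
        calc (n + 3) ^ (n + 1) * (n + 2) ^ n
            < (n + 3) ^ (n + 1) * (n + 1) ^ (n + 1) :=
              mul_lt_mul_of_pos_left IH (by positivity)
          _ < (n + 2) ^ (2 * (n + 1)) := h1
      have h3 : (n + 2) ^ (2 * (n + 1)) = (n + 2) ^ (n + 2) * (n + 2) ^ n := by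
        rw [← Nat.pow_add]; ring_nf
      have h4 : (n + 3) ^ (n + 1) * (n + 2) ^ n < (n + 2) ^ (n + 2) * (n + 2) ^ n := by
        rw [← h3]; exact h2
      have h5 : (n + 3) ^ (n + 1) < (n + 2) ^ (n + 2) :=
        lt_of_mul_lt_mul_right h4 (Nat.zero_le _)
      simpa [Nat.add_assoc] using h5

/-- For every `p ≥ 1`, the maximum perversity index `1 + p/2` for degree-`p`
polynomial latencies strictly exceeds the fully-selfish price of anarchy
`1/(1 − p·(p+1)^(−(p+1)/p))`. -/
theorem stmt17 (p : ℕ) (hp : 1 ≤ p) :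
    1 + (p : ℝ) / 2 > 1 / (1 - (p : ℝ) * ((p : ℝ) + 1) ^ (-(((p : ℝ) + 1) / p))) := by
  set P : ℝ := (p : ℝ) with hPdef
  have hP1 : (1 : ℝ) ≤ P := by rw [hPdef]; exact_mod_cast hp
  have hP0 : (0 : ℝ) < P := by linarith
  have hbase : (0 : ℝ) < P + 1 := by linarith
  set q : ℝ := (P + 1) ^ ((P + 1) / P) with hqdef
  have hq0 : 0 < q := Real.rpow_pos_of_pos hbase _
  -- key: q > P + 2
  have hq : P + 2 < q := by
    have hnat : ((p + 2) ^ p : ℕ) < ((p + 1) ^ (p + 1) : ℕ) := aux_nat_ineq p hp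
    have hreal : ((P + 2)) ^ (p : ℕ) < (P + 1) ^ ((p + 1 : ℕ)) := by
      rw [hPdef]
      exact_mod_cast hnat
    have h1 : P + 2 = (((P + 2)) ^ (p : ℕ)) ^ ((1 : ℝ) / P) := by
      rw [← Real.rpow_natCast (P + 2) p, ← Real.rpow_mul (by linarith)]
      rw [mul_one_div, div_self (ne_of_gt hP0), Real.rpow_one]
    have h2 : q = ((P + 1) ^ ((p + 1 : ℕ))) ^ ((1 : ℝ) / P) := by
      rw [← Real.rpow_natCast (P + 1) (p + 1), ← Real.rpow_mul (le_of_lt hbase)]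
      rw [hqdef]
      congr 1
      push_cast
      field_simp
      rw [hPdef]
    rw [h1, h2]
    apply Real.rpow_lt_rpow (by positivity) hreal (by positivity)
  -- rewrite rpow with negative exponent as inverse
  have hx : (P + 1) ^ (-((P + 1) / P)) = q⁻¹ := by
    rw [Real.rpow_neg (le_of_lt hbase)]
  rw [hx]
  have hden : 0 < 1 - P * q⁻¹ := by
    have : P * q⁻¹ < 1 := by
      rw [mul_inv_lt_iff₀ hq0]
      linarith
    linarith
  rw [gt_iff_lt, div_lt_iff₀ hden]
  have hqinv : q⁻¹ * q = 1 := inv_mul_cancel₀ (ne_of_gt hq0)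
  -- goal: 1 < (1 + P/2) * (1 - P * q⁻¹)
  have hkey : (1 + P / 2) * (1 - P * q⁻¹) - 1 = (P / 2) * q⁻¹ * (q - (P + 2)) := by
    field_simp
    ring
  nlinarith [mul_pos (mul_pos (by linarith : (0:ℝ) < P / 2) (inv_pos.mpr hq0)) (by linarith : (0:ℝ) < q - (P + 2))]
end
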